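/- For circles p = a(X·X) + b·X + c and q = d(X·X) + e·X + f with a, d ≠ 0, writing s = (b·b − 4ac)/(4a²), t = (e·e − 4df)/(4d²), and w = (b/2a − e/2d)·(b/2a − e/2d), the cycle pairing satisfies ⟨p, q⟩ = 2ad(s + t − w). -/

import Mathlib

/-- For circles `p = a(X·X)+b·X+c` and `q = d(X·X)+e·X+f` with `a, d ≠ 0`, writing
`s`, `t` for their sizes and `w` for the quadratic form evaluated at the difference of
centers, we have `⟨p,q⟩ = 2ad(s+t−w)`. -/
theorem stmt_3 {k : Type*} [Field k] (hchar : (2 : k) ≠ 0)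
    {E : Type*} [AddCommGroup E] [Module k E]
    (B : LinearMap.BilinForm k E) (hB : B.IsSymm)
    (haniso : ∀ x : E, B x x = 0 → x = 0)
    (cyc : (k × E × k) → (k × E × k) → k)
    (hcyc : ∀ p q : k × E × k,
      cyc p q = B p.2.1 q.2.1 - 2 * p.1 * q.2.2 - 2 * q.1 * p.2.2)
    (a c d f : k) (b e : E) (ha : a ≠ 0) (hd : d ≠ 0)
    (s t w : k)
    (hs : s = (B b b - 4 * a * c) / (4 * a ^ 2))
    (ht : t = (B e e - 4 * d * f) / (4 * d ^ 2))
    (hw : w = B ((2 * a)⁻¹ • b - (2 * d)⁻¹ • e) ((2 * a)⁻¹ • b - (2 * d)⁻¹ • e)) :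
    cyc (a, b, c) (d, e, f) = 2 * a * d * (s + t - w) := by
  have hsym : B e b = B b e := by simpa using (hB.eq e b)
  have h4 : (4:k) ≠ 0 := by
    have h : (4:k) = 2^2 := by norm_num
    rw [h]; exact pow_ne_zero _ hchar
  have h2a : (2*a) ≠ 0 := mul_ne_zero hchar ha
  have h2d : (2*d) ≠ 0 := mul_ne_zero hchar hd
  have hs' : 4 * a^2 * s = B b b - 4 * a * c := by
    rw [hs]; field_simp
  have ht' : 4 * d^2 * t = B e e - 4 * d * f := by
    rw [ht]; field_simp
  have hw' : 4 * a^2 * d^2 * w = d^2 * B b b - 2 * a * d * B b e + a^2 * B e e := by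
    rw [hw]
    simp only [map_sub, map_smul, LinearMap.sub_apply, LinearMap.smul_apply, smul_eq_mul, hsym]
    field_simp
    ring
  rw [hcyc]
  simp only
  have key : (2*a*d) * (B b e - 2 * a * f - 2 * d * c)
      = (2*a*d) * (2 * a * d * (s + t - w)) := by
    linear_combination (-(d^2)) * hs' + (-(a^2)) * ht' + hw'
  exact mul_left_cancel₀ (mul_ne_zero h2a hd) key
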